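/- Let k be a field and X a type; in F := FreeLieAlgebra k (X ⊕ X), with plain generators x̄ and dotted generators ẋ, let φ : F → F be the unique Lie algebra homomorphism with φ(x̄) = x̄ and φ(ẋ) = x̄, and let V₂ be the smallest k-submodule of F containing all ẋ and closed under the two di-algebra operations (for a, b ∈ V₂: ⁅φ(a), b⁆ ∈ V₂ and ⁅a, φ(b)⁆ ∈ V₂). Then V₂ equals the k-linear span of the left-normed elements w(x, l) := List.foldl (fun u y => ⁅u, ȳ⁆) ẋ l over all (x, l) ∈ X × List X; consequently, these elements form a k-basis of V₂. -/

import Mathlib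

attribute [local instance 100] LieRing.ofAssociativeRing

section
variable (k : Type*) [Field k] (X : Type*)

local notation "V" => (X × List X) →₀ k
local notation "M" => ((X × List X) →₀ k) × k

noncomputable def fgen : X ⊕ X → Module.End k M
  | Sum.inl y => LinearMap.prod
      ((Finsupp.lmapDomain k k (fun q : X × List X => (q.1, q.2 ++ [y]))).comp
        (LinearMap.fst k _ k)) 0
  | Sum.inr x => LinearMap.prod
      ((LinearMap.snd k ((X × List X) →₀ k) k).smulRight (Finsupp.single (x, []) 1)) 0

noncomputable def gend (x : X) (l : List X) : Module.End k M :=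
  LinearMap.prod
    ((LinearMap.snd k ((X × List X) →₀ k) k).smulRight
      ((-1 : k) ^ l.length • Finsupp.single (x, l) 1)) 0

theorem gend_bracket (x : X) (l : List X) (y : X) :
    ⁅gend k X x l, fgen k X (Sum.inl y)⁆ = gend k X x (l ++ [y]) := by
  ext ⟨w, c⟩ <;>
  simp [Ring.lie_def, gend, fgen, Module.End.mul_apply, Finsupp.mapDomain_single,
    Finsupp.mapDomain_smul, pow_succ, smul_smul, mul_comm, -Finsupp.single_mul]
end

section
variable (k : Type*) [Field k] (X : Type*)

local notation "M" => ((X × List X) →₀ k) × k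

noncomputable def wrd (p : X × List X) : FreeLieAlgebra k (X ⊕ X) :=
  List.foldl
    (fun (u : FreeLieAlgebra k (X ⊕ X)) (y : X) => ⁅u, FreeLieAlgebra.of k (Sum.inl y)⁆)
    (FreeLieAlgebra.of k (Sum.inr p.1)) p.2

noncomputable def psiE : FreeLieAlgebra k (X ⊕ X) →ₗ⁅k⁆ Module.End k M :=
  FreeLieAlgebra.lift k (fgen k X)

theorem psiE_wrd (p : X × List X) : psiE k X (wrd k X p) = gend k X p.1 p.2 := by
  obtain ⟨x, l⟩ := p
  induction l using List.reverseRecOn with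
  | nil =>
    simp [wrd, psiE, FreeLieAlgebra.lift_of_apply, fgen, gend]
  | append_singleton l y ih =>
    have : wrd k X (x, l ++ [y]) = ⁅wrd k X (x, l), FreeLieAlgebra.of k (Sum.inl y)⁆ := by
      simp [wrd]
    rw [this, LieHom.map_lie, ih]
    rw [show psiE k X (FreeLieAlgebra.of k (Sum.inl y)) = fgen k X (Sum.inl y) from
      FreeLieAlgebra.lift_of_apply _ _]
    exact gend_bracket k X x l y

theorem wrd_indep : LinearIndependent k (wrd k X) := by
  let Φ : FreeLieAlgebra k (X ⊕ X) →ₗ[k] (X × List X) →₀ k :=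
    (LinearMap.fst k _ k).comp
      ((LinearMap.applyₗ (((0 : (X × List X) →₀ k), (1 : k)) : M)).comp (psiE k X).toLinearMap)
  apply LinearIndependent.of_comp Φ
  have hb : LinearIndependent k (fun p : X × List X => (Finsupp.single p (1:k))) := by
    simpa using Module.Basis.linearIndependent (Finsupp.basisSingleOne (R := k) (ι := X × List X))
  have h2 := hb.units_smul (fun p : X × List X => (-1 : kˣ) ^ p.2.length)
  convert h2 using 1
  funext p
  simp only [Function.comp_apply, Φ, LinearMap.coe_comp, LinearMap.applyₗ_apply_apply,
    LinearMap.applyₗ', LieHom.coe_toLinearMap, LinearMap.coe_mk, AddHom.coe_mk,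
    psiE_wrd]
  simp [gend, Pi.smul_apply', Units.smul_def, Units.val_pow_eq_pow_val, -Finsupp.single_mul]
end


/-- The free Leibniz algebra `V₂` (the closure of the dotted generators of
`FreeLieAlgebra k (X ⊕ X)` under the two di-algebra operations) equals the linear span of the
left-normed bracket words `⁅…⁅⁅ẋ, x̄₂⁆, x̄₃⁆, …, x̄ₙ⁆`; together with their linear independence,
these words form a `k`-basis of `V₂`. -/
theorem free_leibniz_basis (k : Type*) [Field k] (X : Type*)
    (φ : FreeLieAlgebra k (X ⊕ X) →ₗ⁅k⁆ FreeLieAlgebra k (X ⊕ X))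
    (hφl : ∀ x : X, φ (FreeLieAlgebra.of k (Sum.inl x)) = FreeLieAlgebra.of k (Sum.inl x))
    (hφr : ∀ x : X, φ (FreeLieAlgebra.of k (Sum.inr x)) = FreeLieAlgebra.of k (Sum.inl x)) :
    sInf {W : Submodule k (FreeLieAlgebra k (X ⊕ X)) |
        (∀ x : X, FreeLieAlgebra.of k (Sum.inr x) ∈ W) ∧
        ∀ a b : FreeLieAlgebra k (X ⊕ X), a ∈ W → b ∈ W → ⁅φ a, b⁆ ∈ W ∧ ⁅a, φ b⁆ ∈ W} =
      Submodule.span k (Set.range fun p : X × List X =>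
        List.foldl
          (fun (u : FreeLieAlgebra k (X ⊕ X)) (y : X) => ⁅u, FreeLieAlgebra.of k (Sum.inl y)⁆)
          (FreeLieAlgebra.of k (Sum.inr p.1)) p.2) ∧
    LinearIndependent k (fun p : X × List X =>
      List.foldl
        (fun (u : FreeLieAlgebra k (X ⊕ X)) (y : X) => ⁅u, FreeLieAlgebra.of k (Sum.inl y)⁆)
        (FreeLieAlgebra.of k (Sum.inr p.1)) p.2) := by
  have hwrd : (fun p : X × List X =>
      List.foldl
        (fun (u : FreeLieAlgebra k (X ⊕ X)) (y : X) => ⁅u, FreeLieAlgebra.of k (Sum.inl y)⁆)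
        (FreeLieAlgebra.of k (Sum.inr p.1)) p.2) = wrd k X := rfl
  rw [hwrd]
  refine ⟨?_, wrd_indep k X⟩
  set W := Submodule.span k (Set.range (wrd k X)) with hW
  -- W is stable under right-bracket with plain generators
  have stepA : ∀ (y : X) (a : FreeLieAlgebra k (X ⊕ X)), a ∈ W →
      ⁅a, FreeLieAlgebra.of k (Sum.inl y)⁆ ∈ W := by
    intro y a ha
    induction ha using Submodule.span_induction with
    | mem v hv =>
      obtain ⟨⟨x, l⟩, rfl⟩ := hv
      apply Submodule.subset_span
      exact ⟨(x, l ++ [y]), by simp [wrd]⟩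
    | zero => simpa using W.zero_mem
    | add a b _ _ ha hb => rw [add_lie]; exact W.add_mem ha hb
    | smul c a _ ha => rw [smul_lie]; exact W.smul_mem c ha
  -- the Lie subalgebra of elements c with ⁅W, c⁆ ⊆ W
  let K : LieSubalgebra k (FreeLieAlgebra k (X ⊕ X)) :=
    { carrier := {c | ∀ a ∈ W, ⁅a, c⁆ ∈ W}
      add_mem' := fun {p q} hp hq a ha => by
        rw [lie_add]; exact W.add_mem (hp a ha) (hq a ha)
      zero_mem' := fun a ha => by simpa using W.zero_mem
      smul_mem' := fun c {p} hp a ha => by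
        rw [lie_smul]; exact W.smul_mem c (hp a ha)
      lie_mem' := fun {p q} hp hq a ha => by
        rw [leibniz_lie]
        have h3 : ⁅p, ⁅a, q⁆⁆ = -⁅⁅a, q⁆, p⁆ := (lie_skew _ _).symm
        rw [h3, ← sub_eq_add_neg]
        exact W.sub_mem (hq _ (hp a ha)) (hp _ (hq a ha)) }
  -- φ of anything lies in K
  have hφK : ∀ b, φ b ∈ K := by
    intro b
    let ρ : FreeLieAlgebra k (X ⊕ X) →ₗ⁅k⁆ K :=
      FreeLieAlgebra.lift k (fun z =>
        (⟨FreeLieAlgebra.of k (Sum.inl (z.elim id id)), stepA _⟩ : K))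
    have hcomp : K.incl.comp ρ = φ := by
      apply FreeLieAlgebra.hom_ext
      rintro (y | x)
      · simp [ρ, FreeLieAlgebra.lift_of_apply, hφl, LieSubalgebra.coe_incl]
      · simp [ρ, FreeLieAlgebra.lift_of_apply, hφr, LieSubalgebra.coe_incl]
    have : K.incl (ρ b) = φ b := by rw [← LieHom.comp_apply, hcomp]
    rw [← this]
    exact (ρ b).2
  have hWmem : W ∈ {W : Submodule k (FreeLieAlgebra k (X ⊕ X)) |
      (∀ x : X, FreeLieAlgebra.of k (Sum.inr x) ∈ W) ∧
      ∀ a b : FreeLieAlgebra k (X ⊕ X), a ∈ W → b ∈ W → ⁅φ a, b⁆ ∈ W ∧ ⁅a, φ b⁆ ∈ W} := by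
    constructor
    · intro x
      exact Submodule.subset_span ⟨(x, []), rfl⟩
    · intro a b ha hb
      refine ⟨?_, hφK b a ha⟩
      rw [← lie_skew]
      exact W.neg_mem (hφK a b hb)
  apply le_antisymm
  · exact sInf_le hWmem
  · rw [hW, Submodule.span_le]
    rintro _ ⟨⟨x, l⟩, rfl⟩
    rw [SetLike.mem_coe, Submodule.mem_sInf]
    intro W' hW'
    induction l using List.reverseRecOn with
    | nil => exact hW'.1 x
    | append_singleton l y ih =>
      have h1 : wrd k X (x, l ++ [y]) = ⁅wrd k X (x, l), FreeLieAlgebra.of k (Sum.inl y)⁆ := by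
        simp [wrd]
      rw [h1, ← hφr y]
      exact (hW'.2 _ _ ih (hW'.1 y)).2
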